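/- arXiv:2304.01278 — 3 statements merged into one kernel-verified Lean document; each statement's English description precedes it below -/
import Mathlib

section
/- For every masked semilinear set S = ∪_m (S_m + m) (union over all masks m of Σ) there exists an oblivious masked semilinear set T = ∪_m (T_m + m) defining the same subset of 𝕄^Σ, such that every T_m is in canonical m-oblivious form (in particular each T_m is semilinear and m-oblivious). -/
open scoped Classical

/-- A (nondeterministic) Büchi automaton over alphabet `A`, with a finite state set. -/
structure BuchiAutomaton (A : Type) : Type 1 where
  Q : Type
  fin : Fintype Q
  step : Q → A → Set Q
  init : Set Q
  accept : Set Q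

attribute [instance] BuchiAutomaton.fin

/-- A run of the automaton on an infinite word. -/
def BuchiAutomaton.IsRun {A : Type} (M : BuchiAutomaton A) (w : ℕ → A) (ρ : ℕ → M.Q) : Prop :=
  ρ 0 ∈ M.init ∧ ∀ i, ρ (i + 1) ∈ M.step (ρ i) (w i)

/-- The language of a Büchi automaton: words admitting a run visiting the accepting set
infinitely often. -/
def BuchiAutomaton.lang {A : Type} (M : BuchiAutomaton A) : Set (ℕ → A) :=
  {w | ∃ ρ, M.IsRun w ρ ∧ ∀ n, ∃ m, n ≤ m ∧ ρ m ∈ M.accept}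

/-- A Büchi automaton is deterministic if it has a unique initial state and
every transition set is a singleton. -/
def BuchiAutomaton.Deterministic {A : Type} (M : BuchiAutomaton A) : Prop :=
  (∃ q, M.init = {q}) ∧ ∀ q a, ∃ p, M.step q a = {p}

/-- Parikh image of an infinite word: number of occurrences of each letter (`⊤` if infinite). -/
noncomputable def parikhInf {A : Type} (w : ℕ → A) : A → ℕ∞ :=
  fun a => {i : ℕ | w i = a}.encard

/-- The jumping language of a Büchi automaton. -/
def JumpLang {A : Type} (M : BuchiAutomaton A) : Set (ℕ → A) :=
  {w | ∃ w', parikhInf w' = parikhInf w ∧ w' ∈ M.lang}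

/-- Number of occurrences of letter `a` in the `i`-th window of size `k` of `w`. -/
noncomputable def winCount {A : Type} (w : ℕ → A) (k i : ℕ) (a : A) : ℕ :=
  {j : ℕ | k * i ≤ j ∧ j < k * i + k ∧ w j = a}.ncard

/-- `w` and `w'` are `k`-window permutations of each other. -/
def KWinPerm {A : Type} (k : ℕ) (w w' : ℕ → A) : Prop :=
  ∀ i a, winCount w k i a = winCount w' k i a

/-- The `k`-window jumping language of a Büchi automaton. -/
def KWinLang {A : Type} (M : BuchiAutomaton A) (k : ℕ) : Set (ℕ → A) :=
  {w | ∃ w', KWinPerm k w' w ∧ w' ∈ M.lang}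

/-- The `∃`-window jumping language of a Büchi automaton. -/
def EWinLang {A : Type} (M : BuchiAutomaton A) : Set (ℕ → A) :=
  {w | ∃ k, 1 ≤ k ∧ ∃ w', KWinPerm k w' w ∧ w' ∈ M.lang}

/-- Linear subsets of `ℕ^A`. -/
def IsLinearSetVec {A : Type} (R : Set (A → ℕ)) : Prop :=
  ∃ (b : A → ℕ) (P : Finset (A → ℕ)),
    R = {v | ∃ c : (A → ℕ) → ℕ, v = b + ∑ p ∈ P, c p • p}

/-- Semilinear sets: finite unions of linear sets. -/
def IsSemilinearSetVec {A : Type} (R : Set (A → ℕ)) : Prop :=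
  ∃ (n : ℕ) (f : Fin n → Set (A → ℕ)), (∀ i, IsLinearSetVec (f i)) ∧ R = ⋃ i, f i

/-- A mask: a vector over `{0,∞}` with at least one `∞` coordinate. -/
def IsMask {A : Type} (m : A → ℕ∞) : Prop :=
  (∀ a, m a = 0 ∨ m a = ⊤) ∧ ∃ a, m a = ⊤

/-- Adding a mask to a vector of naturals. -/
def maskAdd {A : Type} (x : A → ℕ) (m : A → ℕ∞) : A → ℕ∞ :=
  fun a => (x a : ℕ∞) + m a

/-- Adding a mask to a set of vectors, `R + m`. -/
def maskAddSet {A : Type} (R : Set (A → ℕ)) (m : A → ℕ∞) : Set (A → ℕ∞) :=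
  (fun x => maskAdd x m) '' R

/-- `𝕄^A`: extended-natural vectors with at least one `∞` coordinate. -/
def MVecs (A : Type) : Set (A → ℕ∞) := {v | ∃ a, v a = ⊤}

/-- Masked semilinear set: a union `⋃_m (S_m + m)` over all masks `m`, with each `S_m`
semilinear. -/
def IsMaskedSemilinear {A : Type} (S : Set (A → ℕ∞)) : Prop :=
  ∃ F : (A → ℕ∞) → Set (A → ℕ),
    (∀ m, IsMask m → IsSemilinearSetVec (F m)) ∧
    S = ⋃ m ∈ {m' : A → ℕ∞ | IsMask m'}, maskAddSet (F m) m

/-- `R` is `m`-oblivious: membership only depends on the `m`-equivalence class. -/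
def MOblivious {A : Type} (m : A → ℕ∞) (R : Set (A → ℕ)) : Prop :=
  ∀ u v : A → ℕ, maskAdd u m = maskAdd v m → (u ∈ R ↔ v ∈ R)

/-- `E_m`: unit vectors at the `∞` coordinates of the mask `m`. -/
noncomputable def maskUnits {A : Type} [Fintype A] [DecidableEq A] (m : A → ℕ∞) :
    Finset (A → ℕ) :=
  (Finset.univ.filter (fun a => m a = ⊤)).image (fun a => Pi.single a 1)

/-- `R` is in canonical `m`-oblivious form. -/
def CanonicalOblivious {A : Type} [Fintype A] [DecidableEq A] (m : A → ℕ∞)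
    (R : Set (A → ℕ)) : Prop :=
  ∃ (n : ℕ) (b : Fin n → (A → ℕ)) (P : Fin n → Finset (A → ℕ)),
    (∀ i a, m a = ⊤ → b i a = 0) ∧
    (∀ i p, p ∈ P i → ∀ a, m a = ⊤ → p a = 0) ∧
    R = ⋃ i, {v | ∃ c : (A → ℕ) → ℕ, v = b i + ∑ p ∈ (P i ∪ maskUnits m), c p • p}

section CanonAux

set_option linter.unusedSectionVars false
variable {A : Type} [Fintype A] [DecidableEq A]

/-- Zero out the `⊤`-coordinates of the mask. -/
noncomputable def zmaskF (m : A → ℕ∞) (x : A → ℕ) : A → ℕ :=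
  fun a => if m a = ⊤ then 0 else x a

lemma zmaskF_apply_ne (m : A → ℕ∞) (x : A → ℕ) {a : A} (h : m a ≠ ⊤) :
    zmaskF m x a = x a := if_neg h

lemma zmaskF_apply_top (m : A → ℕ∞) (x : A → ℕ) {a : A} (h : m a = ⊤) :
    zmaskF m x a = 0 := if_pos h

lemma maskAdd_eq_of_agree {m : A → ℕ∞} {u v : A → ℕ}
    (h : ∀ a, m a ≠ ⊤ → u a = v a) : maskAdd u m = maskAdd v m := by
  funext a
  by_cases ha : m a = ⊤
  · simp [maskAdd, ha]
  · simp [maskAdd, h a ha]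

lemma agree_of_maskAdd_eq {m : A → ℕ∞} {u v : A → ℕ}
    (h : maskAdd u m = maskAdd v m) : ∀ a, m a ≠ ⊤ → u a = v a := by
  intro a ha
  have h2 := congrFun h a
  simp only [maskAdd] at h2
  have h3 := WithTop.add_right_cancel ha h2
  exact WithTop.coe_injective h3

lemma zmaskF_linear (m : A → ℕ∞) (b : A → ℕ) (P : Finset (A → ℕ)) (c : (A → ℕ) → ℕ) :
    zmaskF m (b + ∑ p ∈ P, c p • p) = zmaskF m b + ∑ p ∈ P, c p • zmaskF m p := by
  funext a
  by_cases h : m a = ⊤ <;>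
    simp [zmaskF, h, Finset.sum_apply]

lemma mem_maskUnits {m : A → ℕ∞} {q : A → ℕ} :
    q ∈ maskUnits m ↔ ∃ a, m a = ⊤ ∧ q = Pi.single a 1 := by
  simp [maskUnits, eq_comm]

lemma single_one_inj : Function.Injective (fun a : A => (Pi.single a 1 : A → ℕ)) := by
  intro a a' h
  by_contra hne
  have h2 := congrFun h a
  simp only [Pi.single_eq_same] at h2
  rw [Pi.single_eq_of_ne hne] at h2
  exact one_ne_zero h2

lemma disjoint_image_maskUnits (m : A → ℕ∞) (P : Finset (A → ℕ)) :
    Disjoint (P.image (zmaskF m)) (maskUnits m) := by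
  rw [Finset.disjoint_left]
  rintro q hq hq'
  obtain ⟨a, ha, rfl⟩ := mem_maskUnits.mp hq'
  obtain ⟨p, hp, hzp⟩ := Finset.mem_image.mp hq
  have h2 := congrFun hzp a
  simp [zmaskF, ha, Pi.single_eq_same] at h2

lemma mem_image_apply_top {m : A → ℕ∞} {P : Finset (A → ℕ)} {q : A → ℕ}
    (hq : q ∈ P.image (zmaskF m)) {a : A} (ha : m a = ⊤) : q a = 0 := by
  obtain ⟨p, _, rfl⟩ := Finset.mem_image.mp hq
  exact zmaskF_apply_top m p ha

end CanonAux

section CanonComp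
set_option linter.unusedSectionVars false
variable {A : Type} [Fintype A] [DecidableEq A]

lemma comp_fwd (m : A → ℕ∞) (b : A → ℕ) (P : Finset (A → ℕ)) (c : (A → ℕ) → ℕ) :
    ∃ c' : (A → ℕ) → ℕ,
      zmaskF m (b + ∑ p ∈ P, c p • p)
        = zmaskF m b + ∑ q ∈ (P.image (zmaskF m) ∪ maskUnits m), c' q • q := by
  refine ⟨fun q => ∑ p ∈ P.filter (fun p => zmaskF m p = q), c p, ?_⟩
  rw [zmaskF_linear]
  congr 1
  rw [← Finset.sum_fiberwise_of_maps_to (g := zmaskF m)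
      (t := P.image (zmaskF m) ∪ maskUnits m)
      (fun p hp => Finset.mem_union_left _ (Finset.mem_image_of_mem _ hp))
      (fun p => c p • zmaskF m p)]
  refine Finset.sum_congr rfl fun q hq => ?_
  rw [Finset.sum_smul]
  exact Finset.sum_congr rfl fun p hp => by rw [(Finset.mem_filter.mp hp).2]

noncomputable def invPre (m : A → ℕ∞) (P : Finset (A → ℕ)) (q : A → ℕ) : A → ℕ :=
  if h : ∃ p, p ∈ P ∧ zmaskF m p = q then h.choose else 0

lemma invPre_spec {m : A → ℕ∞} {P : Finset (A → ℕ)} {q : A → ℕ}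
    (hq : q ∈ P.image (zmaskF m)) :
    invPre m P q ∈ P ∧ zmaskF m (invPre m P q) = q := by
  obtain ⟨p, hp, hz⟩ := Finset.mem_image.mp hq
  have h : ∃ p, p ∈ P ∧ zmaskF m p = q := ⟨p, hp, hz⟩
  rw [invPre, dif_pos h]
  exact h.choose_spec

lemma comp_bwd (m : A → ℕ∞) (b : A → ℕ) (P : Finset (A → ℕ)) (c : (A → ℕ) → ℕ) :
    ∃ u : A → ℕ, (∃ c' : (A → ℕ) → ℕ, u = b + ∑ p ∈ P, c' p • p) ∧
      ∀ a, m a ≠ ⊤ →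
        u a = (zmaskF m b + ∑ q ∈ (P.image (zmaskF m) ∪ maskUnits m), c q • q) a := by
  classical
  set P' := P.image (zmaskF m) with hP'
  refine ⟨b + ∑ p ∈ P, (fun p => ∑ q ∈ P'.filter (fun q => invPre m P q = p), c q) p • p,
    ⟨_, rfl⟩, ?_⟩
  intro a ha
  have hsum : ∑ p ∈ P, (∑ q ∈ P'.filter (fun q => invPre m P q = p), c q) • p
      = ∑ q ∈ P', c q • invPre m P q := by
    rw [← Finset.sum_fiberwise_of_maps_to (g := invPre m P) (t := P)
        (fun q hq => (invPre_spec hq).1) (fun q => c q • invPre m P q)]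
    refine Finset.sum_congr rfl fun p hp => ?_
    rw [Finset.sum_smul]
    exact Finset.sum_congr rfl fun q hq => by rw [(Finset.mem_filter.mp hq).2]
  simp only [Pi.add_apply, hsum]
  rw [Finset.sum_union (disjoint_image_maskUnits m P)]
  simp only [Pi.add_apply, Finset.sum_apply, Pi.smul_apply, smul_eq_mul]
  rw [zmaskF_apply_ne m b ha]
  have hE : ∑ q ∈ maskUnits m, c q * q a = 0 := by
    refine Finset.sum_eq_zero fun q hq => ?_
    obtain ⟨a', ha', rfl⟩ := mem_maskUnits.mp hq
    have : a ≠ a' := fun h => ha (h ▸ ha')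
    rw [Pi.single_eq_of_ne this, mul_zero]
  rw [hE, add_zero]
  congr 1
  refine Finset.sum_congr rfl fun q hq => ?_
  congr 1
  have hz := congrFun (invPre_spec hq).2 a
  rw [zmaskF_apply_ne m _ ha] at hz
  exact hz

lemma comp_obl (m : A → ℕ∞) (b : A → ℕ) (P : Finset (A → ℕ)) (c : (A → ℕ) → ℕ)
    {v v' : A → ℕ} (hag : ∀ a, m a ≠ ⊤ → v a = v' a)
    (hv : v = zmaskF m b + ∑ q ∈ (P.image (zmaskF m) ∪ maskUnits m), c q • q) :
    ∃ c' : (A → ℕ) → ℕ,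
      v' = zmaskF m b + ∑ q ∈ (P.image (zmaskF m) ∪ maskUnits m), c' q • q := by
  classical
  set P' := P.image (zmaskF m) with hP'
  refine ⟨fun q => if q ∈ P' then c q else
      ∑ a ∈ Finset.univ.filter (fun a => m a = ⊤ ∧ q = Pi.single a 1), v' a, ?_⟩
  funext x
  have hvx := congrFun hv x
  rw [Finset.sum_union (disjoint_image_maskUnits m P)] at hvx ⊢
  simp only [Pi.add_apply, Finset.sum_apply, Pi.smul_apply, smul_eq_mul] at hvx ⊢
  have hunits : ∀ (d : (A → ℕ) → ℕ), ∑ q ∈ maskUnits m, d q * q x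
      = ∑ a ∈ Finset.univ.filter (fun a => m a = ⊤), d ((Pi.single a 1 : A → ℕ)) * (Pi.single a 1 : A → ℕ) x := by
    intro d
    rw [maskUnits, Finset.sum_image (fun a _ a' _ h => single_one_inj h)]
  have hPfix : ∀ q ∈ P', (if q ∈ P' then c q else
      ∑ a ∈ Finset.univ.filter (fun a => m a = ⊤ ∧ q = Pi.single a 1), v' a) = c q :=
    fun q hq => if_pos hq
  by_cases hx : m x = ⊤
  · -- ∞ coordinate
    rw [zmaskF_apply_top m b hx]
    have hP0 : ∀ (d : (A → ℕ) → ℕ), ∑ q ∈ P', d q * q x = 0 := by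
      intro d
      exact Finset.sum_eq_zero fun q hq => by rw [mem_image_apply_top hq hx, mul_zero]
    rw [hP0, hunits, zero_add, zero_add]
    rw [Finset.sum_eq_single x]
    · have hx' : (x : A) ∈ Finset.univ.filter (fun a => m a = ⊤) := by
        simp [hx]
      have hnot : (Pi.single x 1 : A → ℕ) ∉ P' := by
        intro hmem
        have := mem_image_apply_top hmem hx
        rw [Pi.single_eq_same] at this
        exact one_ne_zero this
      rw [if_neg hnot, Pi.single_eq_same, mul_one]
      have hfilter : Finset.univ.filter
          (fun a => m a = ⊤ ∧ (Pi.single x 1 : A → ℕ) = Pi.single a 1) = {x} := by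
        ext a
        simp only [Finset.mem_filter, Finset.mem_univ, true_and, Finset.mem_singleton]
        constructor
        · rintro ⟨-, h⟩
          exact (single_one_inj h.symm)
        · rintro rfl
          exact ⟨hx, rfl⟩
      rw [hfilter, Finset.sum_singleton]
    · intro a _ hax
      rw [Pi.single_eq_of_ne (Ne.symm hax), mul_zero]
    · intro h
      exact absurd (by simp [hx]) h
  · -- finite coordinate
    have hE0 : ∀ (d : (A → ℕ) → ℕ), ∑ q ∈ maskUnits m, d q * q x = 0 := by
      intro d
      refine Finset.sum_eq_zero fun q hq => ?_
      obtain ⟨a', ha', rfl⟩ := mem_maskUnits.mp hq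
      have : x ≠ a' := fun h => hx (h ▸ ha')
      rw [Pi.single_eq_of_ne this, mul_zero]
    rw [hE0, add_zero] at hvx
    rw [hE0, add_zero]
    rw [← hag x hx, hvx]
    congr 1
    exact Finset.sum_congr rfl fun q hq => by rw [hPfix q hq]
end CanonComp

section CanonMain
set_option linter.unusedSectionVars false
variable {A : Type} [Fintype A] [DecidableEq A]

lemma per_mask (m : A → ℕ∞) (S : Set (A → ℕ)) (hS : IsSemilinearSetVec S) :
    ∃ T : Set (A → ℕ), IsSemilinearSetVec T ∧ MOblivious m T ∧ CanonicalOblivious m T ∧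
      maskAddSet T m = maskAddSet S m := by
  obtain ⟨n, f, hlin, rfl⟩ := hS
  choose b P hP using hlin
  refine ⟨⋃ i, {v | ∃ c : (A → ℕ) → ℕ,
      v = zmaskF m (b i) + ∑ q ∈ ((P i).image (zmaskF m) ∪ maskUnits m), c q • q},
    ?_, ?_, ?_, ?_⟩
  · exact ⟨n, _, fun i => ⟨zmaskF m (b i), (P i).image (zmaskF m) ∪ maskUnits m, rfl⟩, rfl⟩
  · intro u v huv
    have hag := agree_of_maskAdd_eq huv
    have hag' := agree_of_maskAdd_eq huv.symm
    constructor
    · intro hu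
      simp only [Set.mem_iUnion, Set.mem_setOf_eq] at hu ⊢
      obtain ⟨i, c, hc⟩ := hu
      exact ⟨i, comp_obl m (b i) (P i) c hag hc⟩
    · intro hv
      simp only [Set.mem_iUnion, Set.mem_setOf_eq] at hv ⊢
      obtain ⟨i, c, hc⟩ := hv
      exact ⟨i, comp_obl m (b i) (P i) c hag' hc⟩
  · exact ⟨n, fun i => zmaskF m (b i), fun i => (P i).image (zmaskF m),
      fun i a ha => zmaskF_apply_top m (b i) ha,
      fun i p hp a ha => mem_image_apply_top hp ha, rfl⟩
  · ext v
    simp only [maskAddSet, Set.mem_image, Set.mem_iUnion, Set.mem_setOf_eq]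
    constructor
    · rintro ⟨x, ⟨i, c, hc⟩, rfl⟩
      obtain ⟨u, ⟨c', hu⟩, hagr⟩ := comp_bwd m (b i) (P i) c
      refine ⟨u, ⟨i, ?_⟩, ?_⟩
      · rw [hP i]; exact ⟨c', hu⟩
      · refine maskAdd_eq_of_agree fun a ha => ?_
        rw [hagr a ha, hc]
    · rintro ⟨x, ⟨i, hx⟩, rfl⟩
      rw [hP i] at hx
      obtain ⟨c, rfl⟩ := hx
      obtain ⟨c', hc'⟩ := comp_fwd m (b i) (P i) c
      refine ⟨zmaskF m _, ⟨i, c', hc'⟩, ?_⟩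
      exact maskAdd_eq_of_agree fun a ha => zmaskF_apply_ne m _ ha

end CanonMain


/-- Every masked semilinear set has an equivalent oblivious masked semilinear
representation in which every component is in canonical `m`-oblivious form. -/
theorem masked_semilinear_canonical_oblivious (A : Type) [Fintype A] [DecidableEq A]
    (F : (A → ℕ∞) → Set (A → ℕ)) (hF : ∀ m, IsMask m → IsSemilinearSetVec (F m)) :
    ∃ G : (A → ℕ∞) → Set (A → ℕ),
      (∀ m, IsMask m →
        IsSemilinearSetVec (G m) ∧ MOblivious m (G m) ∧ CanonicalOblivious m (G m)) ∧
      (⋃ m ∈ {m' : A → ℕ∞ | IsMask m'}, maskAddSet (F m) m) =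
        (⋃ m ∈ {m' : A → ℕ∞ | IsMask m'}, maskAddSet (G m) m) := by
  have key : ∀ m : A → ℕ∞, ∃ T : Set (A → ℕ), IsMask m →
      (IsSemilinearSetVec T ∧ MOblivious m T ∧ CanonicalOblivious m T ∧
        maskAddSet T m = maskAddSet (F m) m) := by
    intro m
    by_cases hm : IsMask m
    · obtain ⟨T, h1, h2, h3, h4⟩ := per_mask m (F m) (hF m hm)
      exact ⟨T, fun _ => ⟨h1, h2, h3, h4⟩⟩
    · exact ⟨∅, fun h => absurd h hm⟩
  choose G hG using key
  refine ⟨G, fun m hm => ⟨(hG m hm).1, (hG m hm).2.1, (hG m hm).2.2.1⟩, ?_⟩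
  refine Set.iUnion_congr fun m => Set.iUnion_congr fun hm => ?_
  exact ((hG m hm).2.2.2).symm
end

section
/- Let D be the deterministic automaton over Σ = {a,b} with states {q₀,q₁,q₂,q₃, sink}, initial state q₀, accepting set {q₃}, and transitions δ(q₀,a) = q₁, δ(q₀,b) = q₂, δ(q₁,b) = q₀, δ(q₂,b) = q₀, δ(q₂,a) = q₃, δ(q₃,b) = q₃, and all other transitions (δ(q₁,a), δ(q₃,a), and both transitions from sink) going to the non-accepting sink state. Then for every k ≥ 2 there is no deterministic Büchi automaton B over Σ with L(B) = J_k⊞(D). -/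
open scoped Classical

/-- The deterministic automaton `D` of Statement 10, over `Σ = {a,b}` (with `a = 0`, `b = 1`),
states `q₀,…,q₃, sink` encoded as `0,…,3,4`. -/
def D10 : BuchiAutomaton (Fin 2) where
  Q := Fin 5
  fin := inferInstance
  step q a := {(![![1, 2], ![4, 0], ![3, 0], ![4, 3], ![4, 4]] : Fin 5 → Fin 2 → Fin 5) q a}
  init := {0}
  accept := {3}


lemma fin2_cases (a : Fin 2) : a = 0 ∨ a = 1 := by fin_cases a <;> simp

def evenPos (k i : ℕ) : ℕ := if Even (k*i) then k*i else k*i+1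
def oddPos (k i : ℕ) : ℕ := if Even (k*i) then k*i+1 else k*i

lemma evenPos_even (k i : ℕ) : Even (evenPos k i) := by
  unfold evenPos; split
  · assumption
  · rename_i h; simp [Nat.even_add_one, h]

lemma oddPos_odd (k i : ℕ) : ¬ Even (oddPos k i) := by
  unfold oddPos; split
  · rename_i h; simp [Nat.even_add_one, h]
  · assumption

lemma le_evenPos (k i : ℕ) : k*i ≤ evenPos k i := by unfold evenPos; split <;> omega
lemma evenPos_lt (k i : ℕ) (hk : 2 ≤ k) : evenPos k i < k*i + k := by
  unfold evenPos; split <;> omega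
lemma le_oddPos (k i : ℕ) : k*i ≤ oddPos k i := by unfold oddPos; split <;> omega
lemma oddPos_lt (k i : ℕ) (hk : 2 ≤ k) : oddPos k i < k*i + k := by
  unfold oddPos; split <;> omega

noncomputable def wOf (P : Set ℕ) : ℕ → Fin 2 := fun j => if j ∈ P then 0 else 1

lemma wOf_eq_zero {P : Set ℕ} {j : ℕ} : wOf P j = 0 ↔ j ∈ P := by
  unfold wOf; split <;> simp_all

lemma wOf_eq_one {P : Set ℕ} {j : ℕ} : wOf P j = 1 ↔ j ∉ P := by
  unfold wOf; split <;> simp_all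

def tbl10 : Fin 5 → Fin 2 → Fin 5 := ![![1, 2], ![4, 0], ![3, 0], ![4, 3], ![4, 4]]

lemma D10_step (q : Fin 5) (a : Fin 2) : D10.step q a = {tbl10 q a} := rfl

lemma D10_step_mem {q q' : Fin 5} {a : Fin 2} (h : q' ∈ D10.step q a) : q' = tbl10 q a := h

lemma mem_lang_D10 {P : Set ℕ} {p : ℕ} (hp : ¬ Even p) (hpP : p ∈ P)
    (hS : ∀ j ∈ P, j ≠ p → Even j ∧ j + 1 < p) :
    wOf P ∈ D10.lang := by
  have hp1 : 1 ≤ p := Nat.pos_of_ne_zero (by rintro rfl; exact hp Even.zero)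
  refine ⟨(fun j => if j ≤ p then (if Even j then 0 else if j - 1 ∈ P then 1 else 2) else 3 : ℕ → Fin 5), ⟨?_, ?_⟩, ?_⟩
  · simp [Nat.zero_le, Even.zero, D10] <;> exact rfl
  · intro i
    rw [D10_step]
    rcases lt_trichotomy i p with hip | hip | hip
    · by_cases hev : Even i
      · have h1 : ¬ Even (i+1) := by simp [Nat.even_add_one, hev]
        have : wOf P i = if i ∈ P then 0 else 1 := by unfold wOf; rfl
        by_cases hiP : i ∈ P <;>
          simp [this, hiP, hip.le, Nat.succ_le_of_lt hip, hev, h1, tbl10, wOf] <;> exact rfl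
      · have hiP : i ∉ P := fun h => hev (hS i h (by omega)).1
        have h1 : Even (i+1) := by simp [Nat.even_add_one, hev]
        have hw : wOf P i = 1 := wOf_eq_one.mpr hiP
        by_cases h2 : i - 1 ∈ P <;>
          simp [hw, hip.le, Nat.succ_le_of_lt hip, hev, h1, h2, tbl10] <;> exact rfl
    · subst hip
      have h2 : i - 1 ∉ P := by
        intro h; have := hS _ h (by omega); omega
      have hw : wOf P i = 0 := wOf_eq_zero.mpr hpP
      simp [hw, hp, h2, tbl10] <;> exact rfl
    · have hiP : i ∉ P := by intro h; have := hS _ h (by omega); omega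
      have hw : wOf P i = 1 := wOf_eq_one.mpr hiP
      have h1 : ¬ i ≤ p := by omega
      have h2 : ¬ i + 1 ≤ p := by omega
      simp [hw, h1, h2, tbl10] <;> exact rfl
  · intro n
    refine ⟨max n (p+1), le_max_left _ _, ?_⟩
    have : ¬ max n (p+1) ≤ p := by omega
    simp [this, D10] <;> exact rfl

lemma winCount_eq (w : ℕ → Fin 2) (k i : ℕ) (a : Fin 2) :
    winCount w k i a = (Set.Ico (k*i) (k*i+k) ∩ {j | w j = a}).ncard := by
  unfold winCount; congr 1; ext j; simp [Set.mem_Ico, and_assoc]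

lemma ncard_Ico (a b : ℕ) : (Set.Ico a b).ncard = b - a := by
  rw [← Finset.coe_Ico, Set.ncard_coe_finset]; simp

lemma kwinperm_of {k : ℕ} (hk : 1 ≤ k) (P P' : Set ℕ)
    (h : ∀ i, (Set.Ico (k*i) (k*i+k) ∩ P).ncard = (Set.Ico (k*i) (k*i+k) ∩ P').ncard) :
    KWinPerm k (wOf P) (wOf P') := by
  intro i a
  have hfin : (Set.Ico (k*i) (k*i+k)).Finite := Set.finite_Ico _ _
  have e0 : ∀ (Q : Set ℕ), {j | wOf Q j = (0 : Fin 2)} = Q := by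
    intro Q; ext j; simp [wOf_eq_zero]
  have e1 : ∀ (Q : Set ℕ), {j | wOf Q j = (1 : Fin 2)} = Qᶜ := by
    intro Q; ext j; simp [wOf_eq_one]
  have compl : ∀ (Q : Set ℕ), (Set.Ico (k*i) (k*i+k) ∩ Qᶜ).ncard
      = k - (Set.Ico (k*i) (k*i+k) ∩ Q).ncard := by
    intro Q
    have : Set.Ico (k*i) (k*i+k) ∩ Qᶜ
        = Set.Ico (k*i) (k*i+k) \ (Set.Ico (k*i) (k*i+k) ∩ Q) := by
      ext j; simp [Set.mem_Ico]; 
    rw [this, Set.ncard_diff Set.inter_subset_left (hfin.subset Set.inter_subset_left),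
      ncard_Ico]
    omega
  rcases fin2_cases a with rfl | rfl
  · rw [winCount_eq, winCount_eq, e0, e0]; exact h i
  · rw [winCount_eq, winCount_eq, e1, e1, compl, compl, h i]

lemma evenPos_le (k i : ℕ) : evenPos k i ≤ k*i+1 := by unfold evenPos; split <;> omega

lemma window_eq {k m i j : ℕ} (h1 : k*m ≤ j) (h2 : j < k*m+k)
    (h3 : k*i ≤ j) (h4 : j < k*i+k) : m = i := by
  have a1 : k*m < k*(i+1) := by rw [Nat.mul_succ]; omega
  have a2 : k*i < k*(m+1) := by rw [Nat.mul_succ]; omega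
  have b1 := Nat.lt_of_mul_lt_mul_left a1
  have b2 := Nat.lt_of_mul_lt_mul_left a2
  omega

def Pfin (g : ℕ → ℕ) (k n : ℕ) : Set ℕ := {j | ∃ i ≤ n, j = evenPos k (g i)}
def Pfin' (g : ℕ → ℕ) (k n : ℕ) : Set ℕ :=
  {j | (∃ i < n, j = evenPos k (g i)) ∨ j = oddPos k (g n)}

lemma stage_kwp {k : ℕ} (hk : 2 ≤ k) (g : ℕ → ℕ) (n : ℕ)
    (hg : ∀ a b, a < b → b ≤ n → g a < g b) :
    KWinPerm k (wOf (Pfin' g k n)) (wOf (Pfin g k n)) := by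
  apply kwinperm_of (by omega)
  intro i
  by_cases hex : ∃ i₀, i₀ ≤ n ∧ g i₀ = i
  · obtain ⟨i₀, hi₀n, hgi₀⟩ := hex
    have h1 : Set.Ico (k*i) (k*i+k) ∩ Pfin g k n = {evenPos k i} := by
      ext j
      simp only [Set.mem_inter_iff, Set.mem_Ico, Set.mem_singleton_iff, Pfin, Set.mem_setOf_eq]
      constructor
      · rintro ⟨⟨hj1, hj2⟩, i', hi', rfl⟩
        rw [window_eq (le_evenPos k (g i')) (evenPos_lt k (g i') hk) hj1 hj2]
      · rintro rfl
        exact ⟨⟨le_evenPos k i, evenPos_lt k i hk⟩, i₀, hi₀n, by rw [hgi₀]⟩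
    have h2 : Set.Ico (k*i) (k*i+k) ∩ Pfin' g k n
        = {if i₀ = n then oddPos k i else evenPos k i} := by
      ext j
      simp only [Set.mem_inter_iff, Set.mem_Ico, Set.mem_singleton_iff, Pfin', Set.mem_setOf_eq]
      constructor
      · rintro ⟨⟨hj1, hj2⟩, ⟨i', hi', rfl⟩ | rfl⟩
        · have he : g i' = i :=
            window_eq (le_evenPos k (g i')) (evenPos_lt k (g i') hk) hj1 hj2
          have : ¬ i₀ = n := by
            rintro rfl
            have := hg i' i₀ hi' le_rfl
            omega
          rw [if_neg this, he]
        · have he : g n = i :=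
            window_eq (le_oddPos k (g n)) (oddPos_lt k (g n) hk) hj1 hj2
          have : i₀ = n := by
            by_contra hne
            have := hg i₀ n (lt_of_le_of_ne hi₀n hne) le_rfl
            omega
          rw [if_pos this, he]
      · intro hj
        by_cases hcase : i₀ = n
        · rw [if_pos hcase] at hj
          subst hj
          refine ⟨⟨le_oddPos k i, oddPos_lt k i hk⟩, Or.inr ?_⟩
          rw [← hgi₀, hcase]
        · rw [if_neg hcase] at hj
          subst hj
          exact ⟨⟨le_evenPos k i, evenPos_lt k i hk⟩,
            Or.inl ⟨i₀, lt_of_le_of_ne hi₀n hcase, by rw [hgi₀]⟩⟩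
    rw [h1, h2, Set.ncard_singleton, Set.ncard_singleton]
  · push_neg at hex
    have h1 : Set.Ico (k*i) (k*i+k) ∩ Pfin g k n = ∅ := by
      ext j
      simp only [Set.mem_inter_iff, Set.mem_Ico, Set.mem_empty_iff_false, iff_false,
        Pfin, Set.mem_setOf_eq, not_and]
      rintro ⟨hj1, hj2⟩ ⟨i', hi', rfl⟩
      exact hex i' hi' (window_eq (le_evenPos k (g i')) (evenPos_lt k (g i') hk) hj1 hj2)
    have h2 : Set.Ico (k*i) (k*i+k) ∩ Pfin' g k n = ∅ := by
      ext j
      simp only [Set.mem_inter_iff, Set.mem_Ico, Set.mem_empty_iff_false, iff_false,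
        Pfin', Set.mem_setOf_eq, not_and]
      rintro ⟨hj1, hj2⟩ (⟨i', hi', rfl⟩ | rfl)
      · exact hex i' hi'.le (window_eq (le_evenPos k (g i')) (evenPos_lt k (g i') hk) hj1 hj2)
      · exact hex n le_rfl (window_eq (le_oddPos k (g n)) (oddPos_lt k (g n) hk) hj1 hj2)
    rw [h1, h2]

lemma stage_mem {k : ℕ} (hk : 2 ≤ k) (g : ℕ → ℕ) (n : ℕ)
    (hg : ∀ a b, a < b → b ≤ n → g a < g b) :
    wOf (Pfin g k n) ∈ KWinLang D10 k := by
  refine ⟨wOf (Pfin' g k n), stage_kwp hk g n hg, ?_⟩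
  apply mem_lang_D10 (p := oddPos k (g n)) (oddPos_odd k (g n)) (Or.inr rfl)
  rintro j (⟨i', hi', rfl⟩ | rfl) hne
  · refine ⟨evenPos_even k (g i'), ?_⟩
    have hlt : g i' < g n := hg i' n hi' le_rfl
    have hb1 : evenPos k (g i') ≤ k * g i' + 1 := evenPos_le k (g i')
    have hb2 : k * (g i' + 1) ≤ k * g n := Nat.mul_le_mul_left k hlt
    rw [Nat.mul_succ] at hb2
    by_cases hev : Even (k * g n)
    · have : oddPos k (g n) = k * g n + 1 := if_pos hev
      omega
    · have hp : oddPos k (g n) = k * g n := if_neg hev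
      have hkodd : ¬ Even k := fun h => hev (h.mul_right _)
      have : k % 2 = 1 := Nat.odd_iff.mp (Nat.not_even_iff_odd.mp hkodd)
      omega
  · exact absurd rfl hne

lemma lang_ev_b {w : ℕ → Fin 2} (hw : w ∈ D10.lang) : ∃ N, ∀ j, N ≤ j → w j = 1 := by
  have hw2 : ∃ ρ : ℕ → Fin 5, (ρ 0 = 0 ∧ ∀ i, ρ (i+1) = tbl10 (ρ i) (w i)) ∧
      ∀ n, ∃ m, n ≤ m ∧ ρ m = 3 := by
    obtain ⟨ρ, ⟨h1, h2⟩, h3⟩ := hw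
    exact ⟨ρ, ⟨h1, fun i => h2 i⟩, fun n => (h3 n).imp (fun m hm => ⟨hm.1, hm.2⟩)⟩
  obtain ⟨ρ, ⟨hinit, hstep'⟩, hacc'⟩ := hw2
  have hsink : ∀ i, ρ i = 4 → ∀ j, i ≤ j → ρ j = 4 := by
    intro i h4 j hij
    induction j, hij using Nat.le_induction with
    | base => exact h4
    | succ j hij ih =>
      rw [hstep' j, ih]
      rcases fin2_cases (w j) with h|h <;> rw [h] <;> decide
  obtain ⟨m₀, -, hm₀⟩ := hacc' 0
  have main : ∀ i, m₀ ≤ i → ρ i = 3 := by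
    intro i hi
    induction i, hi using Nat.le_induction with
    | base => exact hm₀
    | succ i hi ih =>
      rcases fin2_cases (w i) with h|h
      · exfalso
        have h4 : ρ (i+1) = 4 := by rw [hstep' i, ih, h]; decide
        obtain ⟨m', hm'1, hm'2⟩ := hacc' (i+1)
        have := hsink (i+1) h4 m' hm'1
        rw [hm'2] at this
        exact absurd this (by decide)
      · rw [hstep' i, ih, h]; decide
  refine ⟨m₀, fun j hj => ?_⟩
  rcases fin2_cases (w j) with h|h
  · exfalso
    have h4 : ρ (j+1) = 4 := by rw [hstep' j, main j hj, h]; decide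
    have h3 : ρ (j+1) = 3 := main (j+1) (by omega)
    rw [h3] at h4
    exact absurd h4 (by decide)
  · exact h

lemma kwin_ev_b {k : ℕ} (hk : 1 ≤ k) {w : ℕ → Fin 2} (hw : w ∈ KWinLang D10 k) :
    ∃ N, ∀ j, N ≤ j → w j = 1 := by
  obtain ⟨w', hperm, hw'⟩ := hw
  obtain ⟨N, hN⟩ := lang_ev_b hw'
  refine ⟨N + k, fun j hj => ?_⟩
  have hmod := Nat.div_add_mod j k
  have hmlt : j % k < k := Nat.mod_lt _ (by omega)
  have hwin1 : k * (j / k) ≤ j := by omega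
  have hwin2 : j < k * (j / k) + k := by omega
  have hNi : N ≤ k * (j / k) := by omega
  have hz : winCount w' k (j / k) 0 = 0 := by
    unfold winCount
    convert Set.ncard_empty ℕ
    ext j'
    simp only [Set.mem_setOf_eq, Set.mem_empty_iff_false, iff_false, not_and]
    intro h1 h2 h3
    have := hN j' (by omega)
    rw [this] at h3
    exact absurd h3 (by decide)
  have hz2 : winCount w k (j / k) 0 = 0 := by rw [← hperm (j / k) 0]; exact hz
  have hfin : {j' : ℕ | k * (j / k) ≤ j' ∧ j' < k * (j / k) + k ∧ w j' = 0}.Finite := by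
    apply (Set.finite_Ico (k * (j / k)) (k * (j / k) + k)).subset
    intro x hx
    exact Set.mem_Ico.mpr ⟨hx.1, hx.2.1⟩
  have hempty : {j' : ℕ | k * (j / k) ≤ j' ∧ j' < k * (j / k) + k ∧ w j' = 0} = ∅ :=
    (Set.ncard_eq_zero hfin).mp hz2
  rcases fin2_cases (w j) with h|h
  · exfalso
    have hmem : j ∈ ({j' : ℕ | k * (j / k) ≤ j' ∧ j' < k * (j / k) + k ∧ w j' = 0}) :=
      ⟨hwin1, hwin2, h⟩
    rw [hempty] at hmem
    exact hmem
  · exact h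

/-- For every `k ≥ 2`, the `k`-window jumping language of `D` is not
recognized by any deterministic Büchi automaton. -/
theorem no_det_buchi_for_kWinLang_D10 (k : ℕ) (hk : 2 ≤ k) :
    ¬ ∃ B : BuchiAutomaton (Fin 2), B.Deterministic ∧ B.lang = KWinLang D10 k := by
  rintro ⟨B, ⟨⟨q0, hq0⟩, hdet⟩, hlang⟩
  choose f hf using hdet
  let ρ : (ℕ → Fin 2) → ℕ → B.Q := fun w n => Nat.rec q0 (fun i q => f q (w i)) n
  have hρs : ∀ w n, ρ w (n+1) = f (ρ w n) (w n) := fun w n => rfl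
  have hrun : ∀ w, B.IsRun w (ρ w) := by
    intro w
    constructor
    · rw [hq0]; rfl
    · intro i; rw [hf (ρ w i) (w i)]; rfl
  have huniq : ∀ w ρ', B.IsRun w ρ' → ∀ n, ρ' n = ρ w n := by
    rintro w ρ' ⟨h0, hs⟩ n
    induction n with
    | zero => rw [hq0] at h0; exact h0
    | succ n ih =>
      have h1 := hs n
      rw [hf (ρ' n) (w n)] at h1
      rw [h1, ih, hρs]
  have hmem : ∀ w, w ∈ B.lang ↔ ∀ n, ∃ m, n ≤ m ∧ ρ w m ∈ B.accept := by
    intro w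
    constructor
    · rintro ⟨ρ', hr, hac⟩ n
      obtain ⟨m, hm1, hm2⟩ := hac n
      exact ⟨m, hm1, by rw [← huniq w ρ' hr m]; exact hm2⟩
    · intro h; exact ⟨ρ w, hrun w, h⟩
  have hagree : ∀ (w w' : ℕ → Fin 2) m, (∀ j, j < m → w j = w' j) → ρ w m = ρ w' m := by
    intro w w' m
    induction m with
    | zero => intro _; rfl
    | succ m ih =>
      intro h
      rw [hρs, hρs, ih (fun j hj => h j (by omega)), h m (by omega)]
  let nxt : Set ℕ → ℕ → ℕ := fun P b =>
    if H : ∃ m, b ≤ m ∧ ρ (wOf P) m ∈ B.accept then H.choose else 0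
  have hnxt : ∀ P b, wOf P ∈ B.lang → b ≤ nxt P b ∧ ρ (wOf P) (nxt P b) ∈ B.accept := by
    intro P b hP
    have H : ∃ m, b ≤ m ∧ ρ (wOf P) m ∈ B.accept := (hmem _).mp hP b
    simp only [nxt, dif_pos H]
    exact H.choose_spec
  let s : ℕ → Set ℕ × ℕ := fun n =>
    Nat.rec ({evenPos k 0}, 0) (fun _ pr => (pr.1 ∪ {evenPos k (nxt pr.1 (k * (pr.2 + 1)))},
      nxt pr.1 (k * (pr.2 + 1)))) n
  let g : ℕ → ℕ := fun n => (s n).2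
  have hgsucc : ∀ n, g (n+1) = nxt (s n).1 (k * (g n + 1)) := fun n => rfl
  have hssucc : ∀ n, (s (n+1)).1 = (s n).1 ∪ {evenPos k (g (n+1))} := fun n => rfl
  have inv : ∀ n, (s n).1 = Pfin g k n ∧ (∀ a b, a < b → b ≤ n → g a < g b) ∧
      (∀ m, m < n → ρ (wOf (Pfin g k m)) (g (m+1)) ∈ B.accept) := by
    intro n
    induction n with
    | zero =>
      refine ⟨?_, fun a b hab hb => by omega, fun m hm => by omega⟩
      show {evenPos k 0} = Pfin g k 0
      ext j
      simp only [Set.mem_singleton_iff, Pfin, Set.mem_setOf_eq]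
      constructor
      · rintro rfl; exact ⟨0, le_rfl, rfl⟩
      · rintro ⟨i, hi, rfl⟩
        have : i = 0 := by omega
        subst this; rfl
    | succ n ih =>
      obtain ⟨ihP, ihmono, ihacc⟩ := ih
      have hlangmem : wOf ((s n).1) ∈ B.lang := by
        rw [ihP, hlang]; exact stage_mem hk g n ihmono
      obtain ⟨hge, hac⟩ := hnxt (s n).1 (k * (g n + 1)) hlangmem
      rw [← hgsucc n] at hge hac
      have hklin : 2 * (g n + 1) ≤ k * (g n + 1) := Nat.mul_le_mul_right _ hk
      have hmono' : ∀ a b, a < b → b ≤ n + 1 → g a < g b := by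
        intro a b hab hb
        rcases Nat.lt_succ_iff_lt_or_eq.mp (Nat.lt_succ_of_le hb) with h|h
        · exact ihmono a b hab (by omega)
        · subst h
          have ha : g a ≤ g n := by
            rcases Nat.lt_or_ge a n with h'|h'
            · exact (ihmono a n h' le_rfl).le
            · have : a = n := by omega
              subst this; exact le_rfl
          omega
      refine ⟨?_, hmono', ?_⟩
      · rw [hssucc n, ihP]
        ext j
        simp only [Set.mem_union, Set.mem_singleton_iff, Pfin, Set.mem_setOf_eq]
        constructor
        · rintro (⟨i, hi, rfl⟩ | rfl)
          · exact ⟨i, by omega, rfl⟩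
          · exact ⟨n+1, le_rfl, rfl⟩
        · rintro ⟨i, hi, rfl⟩
          rcases Nat.lt_or_ge i (n+1) with h'|h'
          · exact Or.inl ⟨i, by omega, rfl⟩
          · have : i = n+1 := by omega
            subst this; exact Or.inr rfl
      · intro m hm
        rcases Nat.lt_or_ge m n with h'|h'
        · exact ihacc m h'
        · have : m = n := by omega
          subst this
          rw [ihP] at hac
          exact hac
  have ggrow : ∀ n, k * (g n + 1) ≤ g (n+1) := by
    intro n
    have hlangmem : wOf ((s n).1) ∈ B.lang := by
      rw [(inv n).1, hlang]; exact stage_mem hk g n (inv n).2.1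
    have := (hnxt (s n).1 (k * (g n + 1)) hlangmem).1
    rw [← hgsucc n] at this
    exact this
  have gmono : StrictMono g := by
    apply strictMono_nat_of_lt_succ
    intro n
    have h1 := ggrow n
    have h2 : 2 * (g n + 1) ≤ k * (g n + 1) := Nat.mul_le_mul_right _ hk
    omega
  have gge : ∀ n, n ≤ g n := fun n => gmono.le_apply
  set Plim : Set ℕ := {j | ∃ i, j = evenPos k (g i)} with hPlim
  have hWlang : wOf Plim ∈ B.lang := by
    rw [hmem]
    intro n
    refine ⟨g (n+1), le_trans (by omega) (gge (n+1)), ?_⟩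
    have hagreeW : ρ (wOf Plim) (g (n+1)) = ρ (wOf (Pfin g k n)) (g (n+1)) := by
      apply hagree
      intro j hj
      have hiff : j ∈ Plim ↔ j ∈ Pfin g k n := by
        constructor
        · rintro ⟨i, rfl⟩
          refine ⟨i, ?_, rfl⟩
          by_contra hgt
          push_neg at hgt
          have h1 : g (n+1) ≤ g i := gmono.monotone hgt
          have h2 : g i ≤ k * g i := Nat.le_mul_of_pos_left _ (by omega)
          have h3 := le_evenPos k (g i)
          omega
        · rintro ⟨i, -, rfl⟩; exact ⟨i, rfl⟩
      unfold wOf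
      by_cases hmemj : j ∈ Plim
      · rw [if_pos hmemj, if_pos (hiff.mp hmemj)]
      · rw [if_neg hmemj, if_neg (fun h => hmemj (hiff.mpr h))]
    rw [hagreeW]
    exact (inv (n+1)).2.2 n (Nat.lt_succ_self n)
  have hWkwin : wOf Plim ∈ KWinLang D10 k := hlang ▸ hWlang
  obtain ⟨N, hN⟩ := kwin_ev_b (by omega) hWkwin
  have hjN : N ≤ evenPos k (g N) := by
    have h1 := gge N
    have h2 : g N ≤ k * g N := Nat.le_mul_of_pos_left _ (by omega)
    have h3 := le_evenPos k (g N)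
    omega
  have h0 : wOf Plim (evenPos k (g N)) = 0 := wOf_eq_zero.mpr ⟨N, rfl⟩
  have h1 : wOf Plim (evenPos k (g N)) = 1 := hN _ hjN
  rw [h0] at h1
  exact absurd h1 (by decide)
end

section
/- For every nondeterministic Büchi automaton A over a finite alphabet Σ there exist m ≥ 0 and regular languages S₁,T₁,…,S_m,T_m ⊆ Σ^* (languages of finite-word nondeterministic finite automata) such that L(A) = ∪_{i=1}^m S_i · T_i^ω, where S·T^ω denotes the set of infinite words of the form x·y₁y₂⋯ ∈ Σ^ω with x ∈ S and y_j ∈ T for all j ≥ 1. -/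
open scoped Classical

/-- A language of finite words is regular if it is recognized by a nondeterministic finite
automaton with finitely many states. -/
def IsRegularLang {A : Type} (L : Language A) : Prop :=
  ∃ (Q : Type) (_ : Fintype Q) (M : NFA A Q), M.accepts = L

/-- The finite prefix `x · y₀ · y₁ ⋯ y_{j-1}` of the infinite concatenation. -/
def catPrefix {A : Type} (x : List A) (y : ℕ → List A) : ℕ → List A
  | 0 => x
  | j + 1 => catPrefix x y j ++ y j

/-- Membership of an infinite word `w` in `S · T^ω`: `w = x · y₁ y₂ ⋯` with `x ∈ S` and all
`y_j ∈ T`. -/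
def InOmegaCat {A : Type} (S T : Language A) (w : ℕ → A) : Prop :=
  ∃ (x : List A) (y : ℕ → List A),
    x ∈ S ∧ (∀ j, y j ∈ T) ∧
    (∀ n : ℕ, ∃ j, n < (catPrefix x y j).length) ∧
    (∀ j i (h : i < (catPrefix x y j).length), (catPrefix x y j).get ⟨i, h⟩ = w i)

section BuchiProofAux

variable {A : Type}

/-- Path relation: there is a run from `p` to `r` reading `u` with step sets `f`. -/
inductive StepsF {Q : Type} (f : Q → A → Set Q) : Q → List A → Q → Prop
  | nil (p : Q) : StepsF f p [] p
  | cons {p r q : Q} {a : A} {u : List A} :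
      r ∈ f p a → StepsF f r u q → StepsF f p (a :: u) q

lemma stepsF_cons_iff {Q : Type} (f : Q → A → Set Q) (p q : Q) (a : A) (u : List A) :
    StepsF f p (a :: u) q ↔ ∃ r ∈ f p a, StepsF f r u q := by
  constructor
  · rintro (_ | ⟨hr, hsteps⟩); exact ⟨_, hr, hsteps⟩
  · rintro ⟨r, hr, hsteps⟩; exact StepsF.cons hr hsteps

lemma stepsF_nil_iff {Q : Type} (f : Q → A → Set Q) (p q : Q) :
    StepsF f p [] q ↔ p = q := by
  constructor
  · rintro (_ | _); rfl
  · rintro rfl; exact StepsF.nil p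

lemma mem_evalFrom_iff {Q : Type} (N : NFA A Q) :
    ∀ (u : List A) (S : Set Q) (p : Q),
      p ∈ N.evalFrom S u ↔ ∃ s ∈ S, StepsF N.step s u p := by
  intro u
  induction u with
  | nil =>
    intro S p
    simp only [NFA.evalFrom, List.foldl_nil, stepsF_nil_iff]
    constructor
    · intro h; exact ⟨p, h, rfl⟩
    · rintro ⟨s, hs, rfl⟩; exact hs
  | cons a u ih =>
    intro S p
    have : N.evalFrom S (a :: u) = N.evalFrom (N.stepSet S a) u := rfl
    rw [this, ih]
    constructor
    · rintro ⟨r, hr, hsteps⟩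
      rw [NFA.mem_stepSet] at hr
      obtain ⟨s, hs, hrs⟩ := hr
      exact ⟨s, hs, StepsF.cons hrs hsteps⟩
    · rintro ⟨s, hs, hsteps⟩
      rw [stepsF_cons_iff] at hsteps
      obtain ⟨r, hr, hsteps⟩ := hsteps
      exact ⟨r, NFA.mem_stepSet.2 ⟨s, hs, hr⟩, hsteps⟩

lemma mem_evalFrom_opt_iff {Q : Type} (N : NFA A (Option Q)) (f : Q → A → Set Q)
    (hstep : ∀ p a, N.step (some p) a = some '' f p a) :
    ∀ (u : List A) (S : Set Q) (p : Q),
      some p ∈ N.evalFrom (some '' S) u ↔ ∃ s ∈ S, StepsF f s u p := by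
  intro u
  induction u with
  | nil =>
    intro S p
    simp only [NFA.evalFrom, List.foldl_nil, Set.mem_image, stepsF_nil_iff]
    constructor
    · rintro ⟨s, hs, hsp⟩
      exact ⟨s, hs, Option.some_injective _ hsp⟩
    · rintro ⟨s, hs, rfl⟩; exact ⟨s, hs, rfl⟩
  | cons a u ih =>
    intro S p
    have h1 : N.evalFrom (some '' S) (a :: u) = N.evalFrom (N.stepSet (some '' S) a) u := rfl
    have h2 : N.stepSet (some '' S) a = some '' (⋃ s ∈ S, f s a) := by
      ext o
      simp only [NFA.mem_stepSet, Set.mem_image, Set.mem_iUnion]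
      constructor
      · rintro ⟨t, ⟨s, hs, rfl⟩, ht⟩
        rw [hstep] at ht
        obtain ⟨r, hr, rfl⟩ := ht
        exact ⟨r, ⟨s, hs, hr⟩, rfl⟩
      · rintro ⟨r, ⟨s, hs, hr⟩, rfl⟩
        exact ⟨some s, ⟨s, hs, rfl⟩, by rw [hstep]; exact ⟨r, hr, rfl⟩⟩
    rw [h1, h2, ih]
    constructor
    · rintro ⟨r, hr, hsteps⟩
      simp only [Set.mem_iUnion] at hr
      obtain ⟨s, hs, hr⟩ := hr
      exact ⟨s, hs, StepsF.cons hr hsteps⟩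
    · rintro ⟨s, hs, hsteps⟩
      rw [stepsF_cons_iff] at hsteps
      obtain ⟨r, hr, hsteps⟩ := hsteps
      exact ⟨r, Set.mem_iUnion.2 ⟨s, Set.mem_iUnion.2 ⟨hs, hr⟩⟩, hsteps⟩

/-- The language of words leading from an initial state to `q`, provided `q` is accepting. -/
def buchiS (M : BuchiAutomaton A) (q : M.Q) : Language A :=
  {u | (∃ p ∈ M.init, StepsF M.step p u q) ∧ q ∈ M.accept}

/-- The language of nonempty words leading from `q` back to `q`. -/
def buchiT (M : BuchiAutomaton A) (q : M.Q) : Language A :=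
  {v | v ≠ [] ∧ StepsF M.step q v q}

lemma buchiS_regular (M : BuchiAutomaton A) (q : M.Q) : IsRegularLang (buchiS M q) := by
  refine ⟨M.Q, M.fin, ⟨M.step, M.init, {p | p = q ∧ q ∈ M.accept}⟩, ?_⟩
  ext u
  show (∃ p ∈ _, p ∈ NFA.evalFrom _ M.init u) ↔ _
  simp only [Set.mem_setOf_eq]
  constructor
  · rintro ⟨p, ⟨rfl, hacc⟩, hp⟩
    rw [mem_evalFrom_iff] at hp
    exact ⟨hp, hacc⟩
  · rintro ⟨⟨s, hs, hsteps⟩, hacc⟩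
    exact ⟨q, ⟨rfl, hacc⟩, (mem_evalFrom_iff _ u M.init q).2 ⟨s, hs, hsteps⟩⟩

lemma buchiT_regular (M : BuchiAutomaton A) (q : M.Q) : IsRegularLang (buchiT M q) := by
  classical
  refine ⟨Option M.Q, inferInstance,
    ⟨fun o a => some '' M.step (o.getD q) a, {none}, {some q}⟩, ?_⟩
  set N : NFA A (Option M.Q) := ⟨fun o a => some '' M.step (o.getD q) a, {none}, {some q}⟩
  have hstep : ∀ p a, N.step (some p) a = some '' M.step p a := fun _ _ => rfl
  ext u
  show (∃ p ∈ _, p ∈ NFA.evalFrom _ N.start u) ↔ _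
  cases u with
  | nil =>
    show (∃ p ∈ ({some q} : Set (Option M.Q)), _) ↔ _
    simp only [Set.mem_singleton_iff]
    constructor
    · rintro ⟨p, rfl, hp⟩
      have : N.evalFrom N.start [] = N.start := rfl
      rw [this] at hp
      simp [N] at hp
    · rintro ⟨hne, _⟩; exact absurd rfl hne
  | cons a v =>
    have h1 : ∀ p, p ∈ N.evalFrom N.start (a :: v) ↔ p ∈ N.evalFrom (N.stepSet N.start a) v :=
      fun _ => Iff.rfl
    have h2 : N.stepSet N.start a = some '' M.step q a := by
      ext o
      simp [NFA.mem_stepSet, N]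
    constructor
    · rintro ⟨p, rfl, hp⟩
      rw [h1, h2, mem_evalFrom_opt_iff N M.step hstep] at hp
      obtain ⟨s, hs, hsteps⟩ := hp
      exact ⟨by simp, StepsF.cons hs hsteps⟩
    · rintro ⟨_, hsteps⟩
      rw [stepsF_cons_iff] at hsteps
      obtain ⟨r, hr, hsteps⟩ := hsteps
      refine ⟨some q, rfl, ?_⟩
      rw [h1, h2, mem_evalFrom_opt_iff N M.step hstep]
      exact ⟨r, hr, hsteps⟩

/-- Segment of an infinite word: `k` letters starting at position `a`. -/
def seg (w : ℕ → A) (a k : ℕ) : List A := List.ofFn (fun i : Fin k => w (a + i))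

@[simp] lemma seg_length (w : ℕ → A) (a k : ℕ) : (seg w a k).length = k := by
  simp [seg]

lemma seg_zero (w : ℕ → A) (a : ℕ) : seg w a 0 = [] := rfl

lemma seg_succ (w : ℕ → A) (a k : ℕ) : seg w a (k + 1) = w a :: seg w (a + 1) k := by
  simp only [seg, List.ofFn_succ]
  refine congrArg₂ List.cons (by simp) ?_
  exact congrArg List.ofFn (funext fun i => congrArg w (by simp [Fin.val_succ]; omega))

lemma seg_getElem (w : ℕ → A) (a k i : ℕ) (h : i < (seg w a k).length) :
    (seg w a k)[i] = w (a + i) := by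
  simp [seg, List.getElem_ofFn]

lemma seg_append (w : ℕ → A) : ∀ (k : ℕ) (a l : ℕ),
    seg w a k ++ seg w (a + k) l = seg w a (k + l) := by
  intro k
  induction k with
  | zero => intro a l; simp [seg_zero]
  | succ k ih =>
    intro a l
    rw [seg_succ, List.cons_append]
    have : a + (k + 1) = (a + 1) + k := by ring
    rw [this, ih (a + 1) l, ← seg_succ]
    congr 1
    omega

lemma steps_seg (M : BuchiAutomaton A) (w : ℕ → A) (ρ : ℕ → M.Q)
    (hρ : ∀ i, ρ (i + 1) ∈ M.step (ρ i) (w i)) :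
    ∀ (k a : ℕ), StepsF M.step (ρ a) (seg w a k) (ρ (a + k)) := by
  intro k
  induction k with
  | zero => intro a; rw [seg_zero]; exact StepsF.nil _
  | succ k ih =>
    intro a
    rw [seg_succ]
    have h := ih (a + 1)
    have : a + 1 + k = a + (k + 1) := by ring
    rw [this] at h
    exact StepsF.cons (hρ a) h

lemma stepsF_run {Q : Type} (f : Q → A → Set Q) {p r : Q} {u : List A}
    (h : StepsF f p u r) :
    ∃ σ : ℕ → Q, σ 0 = p ∧ σ u.length = r ∧
      ∀ i (hi : i < u.length), σ (i + 1) ∈ f (σ i) (u.get ⟨i, hi⟩) := by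
  induction h with
  | nil p => exact ⟨fun _ => p, rfl, rfl, fun i hi => absurd hi (by simp)⟩
  | @cons p r q a u hr _ ih =>
    obtain ⟨σ', h0, hlen, hstep⟩ := ih
    refine ⟨fun n => match n with | 0 => p | i + 1 => σ' i, rfl, hlen, ?_⟩
    intro i hi
    match i with
    | 0 => simpa [h0] using hr
    | i + 1 => exact hstep i (by simpa using hi)

end BuchiProofAux

section BuchiProofMain

variable {A : Type}

lemma getElem_append_right' {l₁ l₂ : List A} {i : ℕ} (h : i < l₂.length)
    (h2 : l₁.length + i < (l₁ ++ l₂).length) :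
    (l₁ ++ l₂)[l₁.length + i]'h2 = l₂[i]'h := by
  rw [List.getElem_append_right (Nat.le_add_right _ _)]
  simp

lemma get_congr {l l' : List A} (h : l = l') {i : ℕ} (hi : i < l.length) :
    l.get ⟨i, hi⟩ = l'.get ⟨i, h ▸ hi⟩ := by subst h; rfl

lemma buchi_lang_subset (M : BuchiAutomaton A) {w : ℕ → A} (hw : w ∈ M.lang) :
    ∃ q : M.Q, InOmegaCat (buchiS M q) (buchiT M q) w := by
  obtain ⟨ρ, ⟨hinit, hstep⟩, hacc⟩ := hw
  have hInf : {m : ℕ | ρ m ∈ M.accept}.Infinite := by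
    intro hfin
    obtain ⟨B, hB⟩ := hfin.bddAbove
    obtain ⟨m, hm, hmem⟩ := hacc (B + 1)
    have := hB hmem
    omega
  obtain ⟨q, hq⟩ : ∃ q : M.Q, {m : ℕ | ρ m ∈ M.accept ∧ ρ m = q}.Infinite := by
    by_contra h
    push_neg at h
    apply hInf
    have : {m : ℕ | ρ m ∈ M.accept} = ⋃ q : M.Q, {m : ℕ | ρ m ∈ M.accept ∧ ρ m = q} := by
      ext m; simp
    rw [this]
    exact Set.finite_iUnion h
  set pr : ℕ → Prop := fun m => ρ m ∈ M.accept ∧ ρ m = q with hprdef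
  have hprInf : (setOf pr).Infinite := hq
  set n : ℕ → ℕ := Nat.nth pr with hndef
  have hnmono : StrictMono n := Nat.nth_strictMono hprInf
  have hnmem : ∀ j, ρ (n j) ∈ M.accept ∧ ρ (n j) = q := fun j =>
    Nat.nth_mem_of_infinite hprInf j
  have hqacc : q ∈ M.accept := (hnmem 0).2 ▸ (hnmem 0).1
  have hcat : ∀ j, catPrefix (seg w 0 (n 0)) (fun j => seg w (n j) (n (j + 1) - n j)) j
      = seg w 0 (n j) := by
    intro j
    induction j with
    | zero => rfl
    | succ j ih =>
      show catPrefix _ _ j ++ _ = _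
      rw [ih]
      have h0 : (0 : ℕ) + n j = n j := by omega
      have h := seg_append w (n j) 0 (n (j + 1) - n j)
      rw [h0] at h
      rw [h]
      congr 1
      have := hnmono (lt_add_one j)
      omega
  refine ⟨q, seg w 0 (n 0), fun j => seg w (n j) (n (j + 1) - n j), ?_, ?_, ?_, ?_⟩
  · refine ⟨⟨ρ 0, hinit, ?_⟩, hqacc⟩
    have h := steps_seg M w ρ hstep (n 0) 0
    rw [zero_add, (hnmem 0).2] at h
    exact h
  · intro j
    show seg w (n j) (n (j + 1) - n j) ∈ buchiT M q
    have hlen : (seg w (n j) (n (j + 1) - n j)).length ≠ 0 := by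
      simp only [seg_length]
      have := hnmono (lt_add_one j)
      omega
    refine ⟨fun hnil => hlen (by rw [hnil]; rfl), ?_⟩
    have h := steps_seg M w ρ hstep (n (j + 1) - n j) (n j)
    have he : n j + (n (j + 1) - n j) = n (j + 1) := by
      have := hnmono (lt_add_one j)
      omega
    rw [he, (hnmem j).2, (hnmem (j + 1)).2] at h
    exact h
  · intro N
    refine ⟨N + 1, ?_⟩
    rw [hcat (N + 1), seg_length]
    have : N + 1 ≤ n (N + 1) := hnmono.le_apply
    omega
  · intro j i h
    have hi' : i < (seg w 0 (n j)).length := (hcat j) ▸ h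
    have hs := seg_getElem w 0 (n j) i hi'
    rw [get_congr (hcat j) h, List.get_eq_getElem, hs, zero_add]

lemma buchi_omega_subset (M : BuchiAutomaton A) (q : M.Q) {w : ℕ → A}
    (hw : InOmegaCat (buchiS M q) (buchiT M q) w) : w ∈ M.lang := by
  classical
  obtain ⟨x, y, ⟨⟨p₀, hp₀, hxsteps⟩, hqacc⟩, hy, _hcov, hget⟩ := hw
  set L : ℕ → ℕ := fun j => (catPrefix x y j).length with hLdef
  have hL0 : L 0 = x.length := rfl
  have hLsucc : ∀ j, L (j + 1) = L j + (y j).length := by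
    intro j
    show (catPrefix x y j ++ y j).length = _
    simp [hLdef]
  have hmono : StrictMono L := by
    apply strictMono_nat_of_lt_succ
    intro j
    have hpos : 0 < (y j).length := List.length_pos_iff.mpr (hy j).1
    rw [hLsucc]
    omega
  have hjle : ∀ j, j ≤ L j := fun j => hmono.le_apply
  obtain ⟨σx, hσx0, hσxlen, hσxstep⟩ := stepsF_run M.step hxsteps
  have hxrun : ∀ i (hi : i < x.length), σx (i + 1) ∈ M.step (σx i) (w i) := by
    intro i hi
    have hg : (catPrefix x y 0).get ⟨i, hi⟩ = w i := hget 0 i hi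
    rw [← hg]
    exact hσxstep i hi
  have hyrun : ∀ j, ∃ σ : ℕ → M.Q, σ 0 = q ∧ σ (y j).length = q ∧
      ∀ i, i < (y j).length → σ (i + 1) ∈ M.step (σ i) (w (L j + i)) := by
    intro j
    obtain ⟨σ, h0, hlen, hst⟩ := stepsF_run M.step (hy j).2
    refine ⟨σ, h0, hlen, ?_⟩
    intro i hi
    have h2 : L j + i < (catPrefix x y (j + 1)).length := by
      show L j + i < L (j + 1)
      rw [hLsucc]; omega
    have hg := hget (j + 1) (L j + i) h2
    rw [List.get_eq_getElem] at hg
    have he : (catPrefix x y (j + 1))[L j + i]'h2 = (y j)[i]'hi := by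
      show (catPrefix x y j ++ y j)[L j + i]'h2 = _
      exact getElem_append_right' hi h2
    rw [he] at hg
    rw [← hg]
    exact hst i hi
  choose σ hσ0 hσlen hσstep using hyrun
  set J : ℕ → ℕ := fun n => Nat.findGreatest (fun j => L j ≤ n) n with hJdef
  have hJ1 : ∀ n, L 0 ≤ n → L (J n) ≤ n := by
    intro n h
    exact Nat.findGreatest_spec (P := fun j => L j ≤ n) (Nat.zero_le n) h
  have hJ2 : ∀ n, L 0 ≤ n → n < L (J n + 1) := by
    intro n h
    by_contra hcon
    push_neg at hcon
    have h1 : J n + 1 ≤ n := le_trans (hjle (J n + 1)) hcon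
    have h3 := Nat.le_findGreatest (P := fun j => L j ≤ n) h1 hcon
    have hJn : Nat.findGreatest (fun j => L j ≤ n) n = J n := rfl
    rw [hJn] at h3
    omega
  have hJeq : ∀ n j, L j ≤ n → n < L (j + 1) → J n = j := by
    intro n j h1 h2
    have hL0n : L 0 ≤ n := le_trans (hmono.monotone (Nat.zero_le j)) h1
    have hj : j ≤ J n := Nat.le_findGreatest (P := fun j => L j ≤ n) (le_trans (hjle j) h1) h1
    by_contra hne
    have hlt : j + 1 ≤ J n := by omega
    have := le_trans (hmono.monotone hlt) (hJ1 n hL0n)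
    omega
  set ρ : ℕ → M.Q := fun n => if n < L 0 then σx n else σ (J n) (n - L (J n)) with hρdef
  have hρx : ∀ n, n < L 0 → ρ n = σx n := by
    intro n h; simp only [hρdef, if_pos h]
  have hρL : ∀ j, ρ (L j) = q := by
    intro j
    have hge : L 0 ≤ L j := hmono.monotone (Nat.zero_le j)
    have hJL : J (L j) = j := hJeq (L j) j le_rfl (hmono (lt_add_one j))
    simp only [hρdef, if_neg (not_lt.mpr hge), hJL, Nat.sub_self, hσ0]
  have hρblk : ∀ n, L 0 ≤ n → ρ n = σ (J n) (n - L (J n)) := by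
    intro n h; simp only [hρdef, if_neg (not_lt.mpr h)]
  have hrun : ∀ n, ρ (n + 1) ∈ M.step (ρ n) (w n) := by
    intro n
    rcases lt_trichotomy (n + 1) (L 0) with h | h | h
    · rw [hρx n (by omega), hρx (n + 1) h]
      exact hxrun n (by rw [← hL0]; omega)
    · have e1 : ρ (n + 1) = q := by rw [h]; exact hρL 0
      have e2 : σx (n + 1) = q := by
        rw [show n + 1 = x.length from by rw [← hL0]; omega]
        exact hσxlen
      rw [e1, ← e2, hρx n (by omega)]
      exact hxrun n (by rw [← hL0]; omega)
    · have hL0n : L 0 ≤ n := by omega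
      have h1 : L (J n) ≤ n := hJ1 n hL0n
      have h2 : n < L (J n + 1) := hJ2 n hL0n
      set j := J n with hj
      have hi : n - L j < (y j).length := by
        have := hLsucc j; omega
      have hstep := hσstep j (n - L j) hi
      have hwn : L j + (n - L j) = n := by omega
      rw [hwn] at hstep
      have hρn : ρ n = σ j (n - L j) := hρblk n hL0n
      rcases eq_or_lt_of_le (show n + 1 ≤ L (j + 1) by omega) with he | hlt
      · have hlen2 : n - L j + 1 = (y j).length := by
          have := hLsucc j; omega
        have : ρ (n + 1) = σ j (n - L j + 1) := by
          rw [he, hρL (j + 1), hlen2]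
          exact (hσlen j).symm
        rw [this, hρn]
        exact hstep
      · have hJn1 : J (n + 1) = j := hJeq (n + 1) j (by omega) hlt
        have : ρ (n + 1) = σ j (n - L j + 1) := by
          rw [hρblk (n + 1) (by omega), hJn1]
          congr 1
          omega
        rw [this, hρn]
        exact hstep
  have hρ0 : ρ 0 ∈ M.init := by
    rcases Nat.eq_zero_or_pos (L 0) with h | h
    · have hx0 : x = [] := List.length_eq_zero_iff.mp (by rw [← hL0]; exact h)
      rw [hx0, stepsF_nil_iff] at hxsteps
      have : ρ 0 = q := by rw [← h]; exact hρL 0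
      rw [this, ← hxsteps]
      exact hp₀
    · rw [hρx 0 h, hσx0]
      exact hp₀
  exact ⟨ρ, ⟨hρ0, hrun⟩, fun n => ⟨L n, hjle n, by rw [hρL n]; exact hqacc⟩⟩

end BuchiProofMain

/-- The language of every Büchi automaton is a finite union
`⋃_{i=1}^m S_i · T_i^ω` with all `S_i, T_i` regular languages of finite words. -/
theorem buchi_lang_eq_union_omega_cat (A : Type) [Fintype A] (M : BuchiAutomaton A) :
    ∃ (m : ℕ) (S T : Fin m → Language A),
      (∀ i, IsRegularLang (S i)) ∧ (∀ i, IsRegularLang (T i)) ∧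
      M.lang = ⋃ i, {w | InOmegaCat (S i) (T i) w} := by
  classical
  set e := (Fintype.equivFin M.Q).symm with he
  refine ⟨Fintype.card M.Q, fun i => buchiS M (e i), fun i => buchiT M (e i),
    fun i => buchiS_regular M (e i), fun i => buchiT_regular M (e i), ?_⟩
  ext w
  simp only [Set.mem_iUnion, Set.mem_setOf_eq]
  constructor
  · intro hw
    obtain ⟨q, hq⟩ := buchi_lang_subset M hw
    refine ⟨e.symm q, ?_⟩
    rw [Equiv.apply_symm_apply]
    exact hq
  · rintro ⟨i, hi⟩
    exact buchi_omega_subset M (e i) hi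
end
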